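/- The convex n-gon has no flip cut edge: for every chord e, the flip graph F_{-{e}} of triangulations avoiding e is connected. -/

import Mathlib

namespace FlipCut

/-- `x` lies strictly inside the open cyclic arc from `a` to `b`
(going forward in the cyclic order on `ZMod n`). -/
def Btw (n : ℕ) (a x b : ZMod n) : Prop :=
  0 < (x - a).val ∧ (x - a).val < (b - a).val

/-- An unordered pair of vertices of the convex `n`-gon is a *chord*:
its two endpoints are distinct and not cyclically adjacent. -/
def IsChord (n : ℕ) (e : Sym2 (ZMod n)) : Prop :=
  ¬ e.IsDiag ∧ ∀ a ∈ e, ∀ b ∈ e, a ≠ b → b ≠ a + 1 ∧ b ≠ a - 1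

/-- Two chords *cross*: they can be written as `{a, b}` and `{c, d}` where `c`
lies strictly inside the open cyclic arc from `a` to `b` and `d` lies strictly
inside the open cyclic arc from `b` to `a` (i.e. the endpoint pairs separate
each other in the cyclic order, equivalently exactly one of `c, d` lies in the
open cyclic arc from `a` to `b`). -/
def Crosses (n : ℕ) (e f : Sym2 (ZMod n)) : Prop :=
  ∃ a b c d : ZMod n, e = s(a, b) ∧ f = s(c, d) ∧ Btw n a c b ∧ Btw n b d a

/-- A *triangulation* of the convex `n`-gon: a set of exactly `n - 3`
pairwise non-crossing chords. -/
def IsTriangulation (n : ℕ) (T : Finset (Sym2 (ZMod n))) : Prop :=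
  T.card = n - 3 ∧ (∀ e ∈ T, IsChord n e) ∧
    ∀ e ∈ T, ∀ f ∈ T, e ≠ f → ¬ Crosses n e f

/-- Triangulations `T` and `T'` differ by a *flip*: their symmetric difference
has exactly two chords. -/
def FlipAdj (n : ℕ) (T T' : Finset (Sym2 (ZMod n))) : Prop :=
  (symmDiff T T').card = 2

/-- `T` *avoids* `X`: `T` contains no chord of `X`. -/
def Avoids (n : ℕ) (T X : Finset (Sym2 (ZMod n))) : Prop :=
  ∀ e ∈ X, e ∉ T

/-- A vertex of the flip graph `F₋ₓ`: a triangulation avoiding `X`. -/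
def AvoidingTri (n : ℕ) (X T : Finset (Sym2 (ZMod n))) : Prop :=
  IsTriangulation n T ∧ Avoids n T X

/-- A single edge of the flip graph `F₋ₓ`: both endpoints are triangulations
avoiding `X` and they differ by a flip. -/
def FlipStep (n : ℕ) (X T T' : Finset (Sym2 (ZMod n))) : Prop :=
  AvoidingTri n X T ∧ AvoidingTri n X T' ∧ FlipAdj n T T'

/-- `S` and `T` are joined by a path in the flip graph `F₋ₓ`: a sequence of
flips in which every intermediate triangulation avoids `X`. -/
def FlipConn (n : ℕ) (X S T : Finset (Sym2 (ZMod n))) : Prop :=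
  Relation.ReflTransGen (FlipStep n X) S T

/-- The flip graph `F₋ₓ` is connected. -/
def FlipGraphConnected (n : ℕ) (X : Finset (Sym2 (ZMod n))) : Prop :=
  ∀ S T, AvoidingTri n X S → AvoidingTri n X T → FlipConn n X S T

/-- `X` is a *flip cut set*: a set of chords such that the flip graph `F₋ₓ`
is disconnected. -/
def IsFlipCutSet (n : ℕ) (X : Finset (Sym2 (ZMod n))) : Prop :=
  (∀ e ∈ X, IsChord n e) ∧ ¬ FlipGraphConnected n X



/-! ### Auxiliary development -/

section Aux

variable {n : ℕ}

/-- cyclic betweenness on naturals, base point `0`. -/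
def BtwN (A X B : ℕ) : Prop := (A < X ∧ X < B) ∨ (B < A ∧ A < X) ∨ (X < B ∧ B < A)

def CrossesN (A B C D : ℕ) : Prop :=
  (BtwN A C B ∧ BtwN B D A) ∨ (BtwN A D B ∧ BtwN B C A)

def ChordN (n A B : ℕ) : Prop :=
  A ≠ B ∧ B ≠ A + 1 ∧ A ≠ B + 1 ∧ ¬(A = 0 ∧ B = n - 1) ∧ ¬(B = 0 ∧ A = n - 1)

def LChord (n : ℕ) (c : ℕ × ℕ) : Prop :=
  c.1 + 2 ≤ c.2 ∧ c.2 ≤ n - 1 ∧ ¬(c.1 = 0 ∧ c.2 = n - 1)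

def LCross (c d : ℕ × ℕ) : Prop :=
  (c.1 < d.1 ∧ d.1 < c.2 ∧ c.2 < d.2) ∨ (d.1 < c.1 ∧ c.1 < d.2 ∧ d.2 < c.2)

lemma val_sub' [NeZero n] (u v : ZMod n) : (u - v).val = (u.val + n - v.val) % n := by
  rcases eq_or_ne v 0 with rfl | hv
  · simp [ZMod.val_zero, Nat.add_mod_right, Nat.mod_eq_of_lt (ZMod.val_lt u)]
  · rw [sub_eq_add_neg, ZMod.val_add, ZMod.neg_val, if_neg hv]
    congr 1
    have := ZMod.val_lt v
    omega

lemma submod {G F : ℕ} (hG : G < n) (hF : F < n) :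
    (F + n - G) % n = if G ≤ F then F - G else F + n - G := by
  split_ifs with h
  · have : F + n - G = n + (F - G) := by omega
    rw [this, Nat.add_mod_left, Nat.mod_eq_of_lt (by omega)]
  · exact Nat.mod_eq_of_lt (by omega)

lemma sub_sub_val [NeZero n] (p x a : ZMod n) :
    (x - a).val = ((x-p).val + n - (a-p).val) % n := by
  have h : x - a = (x - p) - (a - p) := by ring
  rw [h, val_sub']

lemma fval_inj [NeZero n] (p : ZMod n) {x y : ZMod n} (h : (x - p).val = (y - p).val) :
    x = y := by
  have h1 : x - p = y - p := ZMod.val_injective n h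
  have h2 : x - p + p = y - p + p := by rw [h1]
  simpa using h2

lemma btw_iff [NeZero n] (p a x b : ZMod n) :
    Btw n a x b ↔ BtwN ((a-p).val) ((x-p).val) ((b-p).val) := by
  have hA := ZMod.val_lt (a - p)
  have hX := ZMod.val_lt (x - p)
  have hB := ZMod.val_lt (b - p)
  rw [Btw, sub_sub_val p x a, sub_sub_val p b a, submod hA hX, submod hA hB]
  unfold BtwN
  split_ifs <;> omega

lemma crosses_iff [NeZero n] (p a b c d : ZMod n) :
    Crosses n s(a,b) s(c,d) ↔
      CrossesN ((a-p).val) ((b-p).val) ((c-p).val) ((d-p).val) := by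
  constructor
  · rintro ⟨a', b', c', d', he, hf, h1, h2⟩
    rw [Sym2.eq_iff] at he hf
    rw [btw_iff p] at h1 h2
    unfold CrossesN
    rcases he with ⟨rfl, rfl⟩ | ⟨rfl, rfl⟩ <;> rcases hf with ⟨rfl, rfl⟩ | ⟨rfl, rfl⟩ <;>
      tauto
  · rintro (⟨h1, h2⟩ | ⟨h1, h2⟩)
    · exact ⟨a, b, c, d, rfl, rfl, (btw_iff p a c b).2 h1, (btw_iff p b d a).2 h2⟩
    · exact ⟨a, b, d, c, rfl, Sym2.eq_swap, (btw_iff p a d b).2 h1, (btw_iff p b c a).2 h2⟩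

lemma eq_sub_one' (x y : ZMod n) : y = x - 1 ↔ x = y + 1 := by
  constructor <;> intro h <;> rw [h] <;> ring

lemma isChord_pair_iff (a b : ZMod n) :
    IsChord n s(a,b) ↔ a ≠ b ∧ b ≠ a + 1 ∧ a ≠ b + 1 := by
  simp only [IsChord, Sym2.mk_isDiag_iff, Sym2.mem_iff]
  constructor
  · rintro ⟨hd, h⟩
    have H := h a (Or.inl rfl) b (Or.inr rfl) hd
    exact ⟨hd, H.1, fun hc => H.2 ((eq_sub_one' a b).mpr hc)⟩
  · rintro ⟨h1, h2, h3⟩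
    refine ⟨h1, ?_⟩
    rintro x (rfl | rfl) y (rfl | rfl) hxy
    · exact absurd rfl hxy
    · exact ⟨h2, fun h => h3 ((eq_sub_one' x y).mp h)⟩
    · exact ⟨h3, fun h => h2 ((eq_sub_one' x y).mp h)⟩
    · exact absurd rfl hxy

lemma eq_add_one_iff [NeZero n] (hn : 3 ≤ n) (p x y : ZMod n) :
    y = x + 1 ↔ (y - p).val = ((x - p).val + 1) % n := by
  haveI : Fact (1 < n) := ⟨by omega⟩
  have h1 : y = x + 1 ↔ y - p = (x - p) + 1 := by
    constructor <;> intro h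
    · rw [h]; ring
    · have := congrArg (· + p) h
      simp only [sub_add_cancel] at this
      rw [this]; ring
  rw [h1]
  constructor
  · intro h; rw [h, ZMod.val_add, ZMod.val_one]
  · intro h
    apply ZMod.val_injective
    rw [ZMod.val_add, ZMod.val_one]
    exact h

lemma chord_iff [NeZero n] (hn : 3 ≤ n) (p a b : ZMod n) :
    IsChord n s(a,b) ↔ ChordN n ((a-p).val) ((b-p).val) := by
  have hA := ZMod.val_lt (a - p)
  have hB := ZMod.val_lt (b - p)
  have hval : a = b ↔ (a-p).val = (b-p).val :=
    ⟨fun h => by rw [h], fun h => fval_inj p h⟩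
  rw [isChord_pair_iff]
  simp only [ne_eq, hval, eq_add_one_iff hn p a b, eq_add_one_iff hn p b a]
  set A := (a-p).val
  set B := (b-p).val
  have e1 : (A + 1) % n = if A + 1 = n then 0 else A + 1 := by
    split_ifs with h
    · simp [h]
    · exact Nat.mod_eq_of_lt (by omega)
  have e2 : (B + 1) % n = if B + 1 = n then 0 else B + 1 := by
    split_ifs with h
    · simp [h]
    · exact Nat.mod_eq_of_lt (by omega)
  rw [e1, e2]
  unfold ChordN
  split_ifs <;> omega

def del (v : ℕ) (c : ℕ × ℕ) : ℕ × ℕ :=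
  (if c.1 < v then c.1 else c.1 - 1, if c.2 < v then c.2 else c.2 - 1)

lemma lcross_del {v : ℕ} {c d : ℕ × ℕ} (h1 : c.1 ≠ v) (h2 : c.2 ≠ v)
    (h3 : d.1 ≠ v) (h4 : d.2 ≠ v) : LCross (del v c) (del v d) ↔ LCross c d := by
  simp only [LCross, del]
  split_ifs <;> omega

lemma lchord_del {n v : ℕ} {c : ℕ × ℕ} (hn : 4 ≤ n) (hv1 : 1 ≤ v) (hv2 : v ≤ n - 2)
    (h1 : c.1 ≠ v) (h2 : c.2 ≠ v) (hch : LChord n c)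
    (hgap : c.1 < v → v < c.2 → 3 ≤ c.2 - c.1) : LChord (n - 1) (del v c) := by
  simp only [LChord, del] at *
  split_ifs <;> omega

lemma del_inj {v : ℕ} {c d : ℕ × ℕ} (h1 : c.1 ≠ v) (h2 : c.2 ≠ v)
    (h3 : d.1 ≠ v) (h4 : d.2 ≠ v) (h : del v c = del v d) : c = d := by
  have e1 := congrArg Prod.fst h
  have e2 := congrArg Prod.snd h
  simp only [del] at e1 e2
  have : c.1 = d.1 := by split_ifs at e1 <;> omega
  have : c.2 = d.2 := by split_ifs at e2 <;> omega
  exact Prod.ext ‹c.1 = d.1› ‹c.2 = d.2›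

lemma lcount : ∀ (n : ℕ) (S : Finset (ℕ × ℕ)),
    (∀ c ∈ S, LChord n c) →
    (∀ c ∈ S, ∀ d ∈ S, c ≠ d → ¬ LCross c d) → S.card ≤ n - 3 := by
  intro n
  induction n using Nat.strong_induction_on with
  | _ n ih =>
    intro S hch hcr
    rcases S.eq_empty_or_nonempty with rfl | hS
    · simp
    obtain ⟨c₀, hc₀, hmin⟩ := S.exists_min_image (fun c => c.2 - c.1) hS
    have lch0 := hch c₀ hc₀
    have hn4 : 4 ≤ n := by
      obtain ⟨g1, g2, g3⟩ := lch0
      omega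
    set v := c₀.1 + 1 with hv
    have hv1 : 1 ≤ v := by omega
    have hv2 : v ≤ n - 2 := by
      obtain ⟨g1, g2, g3⟩ := lch0
      omega
    have fact : ∀ c ∈ S, c.1 ≠ v ∧ c.2 ≠ v ∧
        (c.1 < v → v < c.2 → c = c₀ ∨ 3 ≤ c.2 - c.1) := by
      intro c hc
      have lch1 := hch c hc
      have hm := hmin c hc
      by_cases hne : c = c₀
      · subst hne
        obtain ⟨g1, g2, g3⟩ := lch1
        exact ⟨by omega, by omega, fun _ _ => Or.inl rfl⟩
      · have lcr := hcr c hc c₀ hc₀ hne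
        have hne' : ¬(c.1 = c₀.1 ∧ c.2 = c₀.2) := by
          rintro ⟨u1, u2⟩
          exact hne (Prod.ext u1 u2)
        rw [LCross] at lcr
        push_neg at lcr
        obtain ⟨g1, g2, g3⟩ := lch1
        obtain ⟨k1, k2, k3⟩ := lch0
        refine ⟨by omega, by omega, fun u1 u2 => Or.inr (by omega)⟩
    have himg : ∀ c ∈ S, LChord (n-1) (del v c) ∨ c = c₀ := by
      intro c hc
      by_cases hne : c = c₀
      · exact Or.inr hne
      · obtain ⟨f1, f2, f3⟩ := fact c hc
        exact Or.inl (lchord_del hn4 hv1 hv2 f1 f2 (hch c hc)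
          (fun u1 u2 => by rcases f3 u1 u2 with h | h; exact absurd h hne; omega))
    have hc0del : 3 ≤ c₀.2 - c₀.1 → LChord (n-1) (del v c₀) := by
      intro h3
      obtain ⟨f1, f2, _⟩ := fact c₀ hc₀
      exact lchord_del hn4 hv1 hv2 f1 f2 lch0 (fun _ _ => h3)
    have hinj : Set.InjOn (del v) S := by
      intro c hc d hd h
      obtain ⟨f1, f2, _⟩ := fact c hc
      obtain ⟨g1, g2, _⟩ := fact d hd
      exact del_inj f1 f2 g1 g2 h
    have hcrimg : ∀ T : Finset (ℕ × ℕ), T ⊆ S →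
        (∀ c' ∈ T.image (del v), ∀ d' ∈ T.image (del v), c' ≠ d' → ¬ LCross c' d') := by
      intro T hTS c' hc' d' hd' hne hLC
      obtain ⟨c, hc, rfl⟩ := Finset.mem_image.1 hc'
      obtain ⟨d, hd, rfl⟩ := Finset.mem_image.1 hd'
      obtain ⟨f1, f2, _⟩ := fact c (hTS hc)
      obtain ⟨g1, g2, _⟩ := fact d (hTS hd)
      have hcd : c ≠ d := fun h => hne (by rw [h])
      exact hcr c (hTS hc) d (hTS hd) hcd ((lcross_del f1 f2 g1 g2).1 hLC)
    by_cases hgap : c₀.2 = c₀.1 + 2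
    · have hcard : ((S.erase c₀).image (del v)).card ≤ (n-1) - 3 := by
        apply ih (n-1) (by omega)
        · intro c' hc'
          obtain ⟨c, hc, rfl⟩ := Finset.mem_image.1 hc'
          rcases himg c (S.erase_subset _ hc) with h | h
          · exact h
          · exact absurd h (Finset.ne_of_mem_erase hc)
        · exact hcrimg _ (S.erase_subset _)
      have e1 : ((S.erase c₀).image (del v)).card = (S.erase c₀).card :=
        Finset.card_image_of_injOn (hinj.mono (fun x hx => S.erase_subset _ hx))
      have e2 : (S.erase c₀).card = S.card - 1 := Finset.card_erase_of_mem hc₀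
      have : 1 ≤ S.card := Finset.card_pos.2 hS
      omega
    · have hcard : (S.image (del v)).card ≤ (n-1) - 3 := by
        apply ih (n-1) (by omega)
        · intro c' hc'
          obtain ⟨c, hc, rfl⟩ := Finset.mem_image.1 hc'
          rcases himg c hc with h | h
          · exact h
          · subst h
            exact hc0del (by obtain ⟨g1, _, _⟩ := lch0; omega)
        · exact hcrimg _ (le_refl _)
      have e1 : (S.image (del v)).card = S.card := Finset.card_image_of_injOn hinj
      omega

lemma crossesN_lcross {A B C D : ℕ} :
    CrossesN A B C D ↔ LCross (min A B, max A B) (min C D, max C D) := by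
  simp only [CrossesN, BtwN, LCross]
  omega

lemma chordN_lchord {A B : ℕ} (hA : A < n) (hB : B < n) (h : ChordN n A B) :
    LChord n (min A B, max A B) := by
  obtain ⟨h1, h2, h3, h4, h5⟩ := h
  exact ⟨by omega, by omega, by omega⟩

/-- endpoint-normalising map to linear chords -/
noncomputable def psi (p : ZMod n) : Sym2 (ZMod n) → ℕ × ℕ :=
  Sym2.lift ⟨fun a b => (min ((a-p).val) ((b-p).val), max ((a-p).val) ((b-p).val)),
    fun a b => by simp [min_comm, max_comm]⟩

lemma psi_mk (p a b : ZMod n) :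
    psi p s(a,b) = (min ((a-p).val) ((b-p).val), max ((a-p).val) ((b-p).val)) := rfl

lemma psi_inj [NeZero n] (p : ZMod n) {e f : Sym2 (ZMod n)} (h : psi p e = psi p f) :
    e = f := by
  induction e using Sym2.ind with | _ a b =>
  induction f using Sym2.ind with | _ c d =>
  rw [psi_mk, psi_mk, Prod.mk.injEq] at h
  have : ((a-p).val = (c-p).val ∧ (b-p).val = (d-p).val) ∨
      ((a-p).val = (d-p).val ∧ (b-p).val = (c-p).val) := by omega
  rcases this with ⟨h1, h2⟩ | ⟨h1, h2⟩
  · rw [fval_inj p h1, fval_inj p h2]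
  · rw [fval_inj p h1, fval_inj p h2, Sym2.eq_swap]

lemma zcount [NeZero n] (hn : 3 ≤ n) (p : ZMod n) (T : Finset (Sym2 (ZMod n)))
    (hch : ∀ e ∈ T, IsChord n e)
    (hcr : ∀ e ∈ T, ∀ f ∈ T, e ≠ f → ¬ Crosses n e f) : T.card ≤ n - 3 := by
  have hcard : T.card = (T.image (psi p)).card :=
    (Finset.card_image_of_injOn (fun x _ y _ h => psi_inj p h)).symm
  rw [hcard]
  apply lcount n
  · intro c hc
    obtain ⟨e, he, rfl⟩ := Finset.mem_image.1 hc
    induction e using Sym2.ind with | _ a b =>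
    rw [psi_mk]
    exact chordN_lchord (ZMod.val_lt _) (ZMod.val_lt _) ((chord_iff hn p a b).1 (hch _ he))
  · intro c hc d hd hne hLC
    obtain ⟨e, he, rfl⟩ := Finset.mem_image.1 hc
    obtain ⟨f, hf, rfl⟩ := Finset.mem_image.1 hd
    induction e using Sym2.ind with | _ a b =>
    induction f using Sym2.ind with | _ a' b' =>
    refine hcr _ he _ hf (fun h => hne (by rw [h])) ?_
    rw [crosses_iff p]
    rw [psi_mk, psi_mk] at hLC
    exact crossesN_lcross.2 hLC

lemma crosses_symm [NeZero n] {e f : Sym2 (ZMod n)} (h : Crosses n e f) :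
    Crosses n f e := by
  induction e using Sym2.ind with | _ a b =>
  induction f using Sym2.ind with | _ c d =>
  rw [crosses_iff (0 : ZMod n)] at h ⊢
  revert h
  simp only [CrossesN, BtwN]
  omega

lemma tri_insert [NeZero n] (hn : 3 ≤ n) {T : Finset (Sym2 (ZMod n))}
    (hT : IsTriangulation n T) {c : Sym2 (ZMod n)} (hc : IsChord n c)
    (hnc : ∀ f ∈ T, ¬ Crosses n c f) : c ∈ T := by
  by_contra h
  obtain ⟨hcard, hch, hcr⟩ := hT
  have : (insert c T).card ≤ n - 3 := by
    apply zcount hn 0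
    · intro e he
      rcases Finset.mem_insert.1 he with rfl | he
      · exact hc
      · exact hch e he
    · intro e he f hf hne
      rcases Finset.mem_insert.1 he with rfl | he
      · rcases Finset.mem_insert.1 hf with rfl | hf
        · exact absurd rfl hne
        · exact hnc _ hf
      · rcases Finset.mem_insert.1 hf with hfc | hf
        · exact fun hcr' => hnc _ he (crosses_symm (by rwa [hfc] at hcr'))
        · exact hcr _ he _ hf hne
  rw [Finset.card_insert_of_notMem h, hcard] at this
  omega

lemma fv_eq_zero_iff [NeZero n] (p x : ZMod n) : (x - p).val = 0 ↔ x = p := by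
  rw [ZMod.val_eq_zero, sub_eq_zero]

lemma fv_p_add_one [NeZero n] (hn : 3 ≤ n) (p : ZMod n) : ((p + 1) - p).val = 1 := by
  haveI : Fact (1 < n) := ⟨by omega⟩
  rw [add_sub_cancel_left, ZMod.val_one]

lemma fv_p_sub_one [NeZero n] (hn : 3 ≤ n) (p : ZMod n) : ((p - 1) - p).val = n - 1 := by
  haveI : Fact (1 < n) := ⟨by omega⟩
  have h : (p - 1) - p = -1 := by ring
  rw [h, ZMod.neg_val, if_neg (one_ne_zero), ZMod.val_one]

lemma fv_padd [NeZero n] (p : ZMod n) (k : ℕ) (hk : k < n) :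
    ((p + (k : ZMod n)) - p).val = k := by
  rw [add_sub_cancel_left, ZMod.val_cast_of_lt hk]

lemma sym2_ne_of_fv [NeZero n] (p : ZMod n) {a b c d : ZMod n}
    (h : ¬(((a-p).val = (c-p).val ∧ (b-p).val = (d-p).val) ∨
      ((a-p).val = (d-p).val ∧ (b-p).val = (c-p).val))) : s(a,b) ≠ s(c,d) := by
  intro he
  rcases Sym2.eq_iff.1 he with ⟨h1, h2⟩ | ⟨h1, h2⟩
  · exact h (Or.inl ⟨by rw [h1], by rw [h2]⟩)
  · exact h (Or.inr ⟨by rw [h1], by rw [h2]⟩)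

lemma seg_blockT [NeZero n] (p : ZMod n) {T : Finset (Sym2 (ZMod n))}
    (hT : IsTriangulation n T) {u v x y : ZMod n}
    (huv : s(u,v) ∈ T) (hxy : s(x,y) ∈ T)
    (h1 : (u-p).val < (x-p).val) (h2 : (x-p).val < (v-p).val)
    (h3 : (y-p).val < (u-p).val ∨ (v-p).val < (y-p).val) : False := by
  refine hT.2.2 _ huv _ hxy (sym2_ne_of_fv p (by omega)) ?_
  rw [crosses_iff p]
  simp only [CrossesN, BtwN]
  omega

lemma anchor_block [NeZero n] (hn : 3 ≤ n) (p : ZMod n) {T : Finset (Sym2 (ZMod n))}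
    (hT : IsTriangulation n T) {v x y : ZMod n}
    (hv : s(p,v) ∈ T ∨ v = p + 1 ∨ v = p - 1) (hxy : s(x,y) ∈ T)
    (h1 : 0 < (x-p).val) (h2 : (x-p).val < (v-p).val)
    (h3 : (v-p).val < (y-p).val) : False := by
  have h0 : (p - p).val = 0 := by simp
  rcases hv with hv | rfl | rfl
  · exact seg_blockT p hT hv hxy (by omega) h2 (Or.inr h3)
  · rw [fv_p_add_one hn] at h2
    omega
  · rw [fv_p_sub_one hn] at h3
    have := ZMod.val_lt (y - p)
    omega

lemma improve [NeZero n] (hn : 3 ≤ n) (p : ZMod n) {T : Finset (Sym2 (ZMod n))}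
    (hT : IsTriangulation n T) (hex : ∃ c ∈ T, p ∉ c) :
    ∃ T', IsTriangulation n T' ∧ FlipAdj n T T' ∧
      (T'.filter (fun c => p ∈ c)).card = (T.filter (fun c => p ∈ c)).card + 1 ∧
      ∀ c ∈ T', c ∈ T ∨ p ∈ c := by
  classical
  obtain ⟨hcard, hch, hcr⟩ := hT
  obtain ⟨c₀, hc₀T, hc₀p⟩ := hex
  have hTpos : 1 ≤ n - 3 := by
    rw [← hcard]
    exact Finset.card_pos.2 ⟨c₀, hc₀T⟩
  have h0 : (p - p).val = 0 := by simp
  set Nb : Finset (ZMod n) :=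
    Finset.univ.filter (fun x => s(p,x) ∈ T ∨ x = p + 1 ∨ x = p - 1) with hNb
  have hNbmem : ∀ x, x ∈ Nb ↔ (s(p,x) ∈ T ∨ x = p + 1 ∨ x = p - 1) := by
    intro x; simp [hNb]
  have hpadd : p + 1 ∈ Nb := (hNbmem _).2 (Or.inr (Or.inl rfl))
  have hpsub : p - 1 ∈ Nb := (hNbmem _).2 (Or.inr (Or.inr rfl))
  have hbound : ∀ x ∈ Nb, 1 ≤ (x-p).val ∧ (x-p).val ≤ n - 1 := by
    intro x hx
    have hlt := ZMod.val_lt (x - p)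
    refine ⟨?_, by omega⟩
    by_contra h
    have h0' : (x-p).val = 0 := by omega
    have hxp : x = p := (fv_eq_zero_iff p x).1 h0'
    rcases (hNbmem _).1 hx with hc | hc | hc
    · exact ((isChord_pair_iff p x).1 (hch _ hc)).1 hxp.symm
    · rw [hxp] at hc
      have h1 := fv_p_add_one hn p
      rw [← hc] at h1
      simp at h1
    · rw [hxp] at hc
      have h1 := fv_p_sub_one hn p
      rw [← hc] at h1
      simp at h1
      omega
  -- the fan case is impossible since some chord misses p
  by_cases hfull : ∀ k, 1 ≤ k → k ≤ n - 1 → ∃ x ∈ Nb, (x - p).val = k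
  · exfalso
    have hsub : Finset.Icc 1 (n-1) ⊆ Nb.image (fun x => (x - p).val) := by
      intro k hk
      rw [Finset.mem_Icc] at hk
      obtain ⟨x, hx, hxk⟩ := hfull k hk.1 hk.2
      exact Finset.mem_image.2 ⟨x, hx, hxk⟩
    have hNbcard : n - 1 ≤ Nb.card := by
      have h1 := Finset.card_le_card hsub
      rw [Nat.card_Icc] at h1
      have h2 := Finset.card_image_le (f := fun x => (x - p).val) (s := Nb)
      omega
    have herase : n - 3 ≤ ((Nb.erase (p+1)).erase (p-1)).card := by
      have e1 : (Nb.erase (p+1)).card + 1 = Nb.card := by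
        rw [Finset.card_erase_of_mem hpadd]
        have := Finset.card_pos.2 ⟨p+1, hpadd⟩
        omega
      have hps : p - 1 ∈ Nb.erase (p+1) := by
        refine Finset.mem_erase.2 ⟨?_, hpsub⟩
        intro h
        have h1 := fv_p_add_one hn p
        have h2 := fv_p_sub_one hn p
        rw [h] at h2
        omega
      have e2 : ((Nb.erase (p+1)).erase (p-1)).card + 1 = (Nb.erase (p+1)).card := by
        rw [Finset.card_erase_of_mem hps]
        have := Finset.card_pos.2 ⟨p-1, hps⟩
        omega
      omega
    have hmap : n - 3 ≤ (T.filter (fun c => p ∈ c)).card := by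
      refine le_trans herase (Finset.card_le_card_of_injOn (fun x => s(p,x)) ?_ ?_)
      · intro x hx
        have hx1 := Finset.mem_of_mem_erase (Finset.mem_of_mem_erase hx)
        have hx2 : x ≠ p - 1 := (Finset.mem_erase.1 hx).1
        have hx3 : x ≠ p + 1 := (Finset.mem_erase.1 (Finset.mem_of_mem_erase hx)).1
        rcases (hNbmem _).1 hx1 with h | h | h
        · exact Finset.mem_filter.2 ⟨h, Sym2.mem_mk_left p x⟩
        · exact absurd h hx3
        · exact absurd h hx2
      · intro x _ y _ h
        rcases Sym2.eq_iff.1 h with ⟨_, h2⟩ | ⟨h1, h2⟩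
        · exact h2
        · rw [← h1, h2]
    have hle := Finset.card_le_card (show T.filter (fun c => p ∈ c) ⊆ T.erase c₀ by
      intro c hc
      rw [Finset.mem_filter] at hc
      refine Finset.mem_erase.2 ⟨?_, hc.1⟩
      intro h
      rw [h] at hc
      exact hc₀p hc.2)
    rw [Finset.card_erase_of_mem hc₀T, hcard] at hle
    omega
  · push_neg at hfull
    obtain ⟨k, hk1, hk2, hknone⟩ := hfull
    have hA'ne : (Nb.filter (fun x => (x-p).val < k)).Nonempty := by
      refine ⟨p + 1, Finset.mem_filter.2 ⟨hpadd, ?_⟩⟩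
      rw [fv_p_add_one hn]
      have := hknone _ hpadd
      rw [fv_p_add_one hn] at this
      omega
    have hB'ne : (Nb.filter (fun x => k < (x-p).val)).Nonempty := by
      refine ⟨p - 1, Finset.mem_filter.2 ⟨hpsub, ?_⟩⟩
      rw [fv_p_sub_one hn]
      have := hknone _ hpsub
      rw [fv_p_sub_one hn] at this
      omega
    obtain ⟨q, hqf, hqmax⟩ :=
      (Nb.filter (fun x => (x-p).val < k)).exists_max_image (fun x => (x-p).val) hA'ne
    obtain ⟨q', hq'f, hq'min⟩ :=
      (Nb.filter (fun x => k < (x-p).val)).exists_min_image (fun x => (x-p).val) hB'ne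
    have hqNb : q ∈ Nb := (Finset.mem_filter.1 hqf).1
    have hq'Nb : q' ∈ Nb := (Finset.mem_filter.1 hq'f).1
    have hqk : (q-p).val < k := (Finset.mem_filter.1 hqf).2
    have hq'k : k < (q'-p).val := (Finset.mem_filter.1 hq'f).2
    have hqb := hbound q hqNb
    have hq'b := hbound q' hq'Nb
    have hgap : ∀ z ∈ Nb, ¬((q-p).val < (z-p).val ∧ (z-p).val < (q'-p).val) := by
      rintro z hz ⟨u1, u2⟩
      rcases lt_trichotomy ((z-p).val) k with h | h | h
      · have := hqmax z (Finset.mem_filter.2 ⟨hz, h⟩)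
        omega
      · exact hknone z hz h
      · have := hq'min z (Finset.mem_filter.2 ⟨hz, h⟩)
        omega
    have hAB : (q-p).val + 2 ≤ (q'-p).val := by omega
    -- the chord q q' is in T
    have hqq'T : s(q,q') ∈ T := by
      refine tri_insert hn ⟨hcard, hch, hcr⟩ ?_ ?_
      · rw [chord_iff hn p]
        exact ⟨by omega, by omega, by omega, by omega, by omega⟩
      · have key : ∀ x y : ZMod n, s(x,y) ∈ T →
            (q-p).val < (x-p).val → (x-p).val < (q'-p).val →
            ((y-p).val < (q-p).val ∨ (q'-p).val < (y-p).val) → False := by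
          intro x y hxy hx1 hx2 hy
          have hyx : s(y,x) ∈ T := by rwa [Sym2.eq_swap] at hxy
          rcases hy with hy | hy
          · by_cases hy0 : (y-p).val = 0
            · have hyp : y = p := (fv_eq_zero_iff p y).1 hy0
              have hxNb : x ∈ Nb := (hNbmem _).2 (Or.inl (by rwa [hyp] at hyx))
              exact hgap x hxNb ⟨hx1, hx2⟩
            · exact anchor_block hn p ⟨hcard, hch, hcr⟩ ((hNbmem q).1 hqNb)
                hyx (by omega) (by omega) (by omega)
          · exact anchor_block hn p ⟨hcard, hch, hcr⟩ ((hNbmem q').1 hq'Nb)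
              hxy (by omega) (by omega) (by omega)
        intro c hc hcross
        induction c using Sym2.ind with | _ x y =>
        rw [crosses_iff p] at hcross
        simp only [CrossesN, BtwN] at hcross
        have hsplit : ((q-p).val < (x-p).val ∧ (x-p).val < (q'-p).val ∧
            ((y-p).val < (q-p).val ∨ (q'-p).val < (y-p).val)) ∨
            ((q-p).val < (y-p).val ∧ (y-p).val < (q'-p).val ∧
            ((x-p).val < (q-p).val ∨ (q'-p).val < (x-p).val)) := by omega
        rcases hsplit with ⟨u1, u2, u3⟩ | ⟨u1, u2, u3⟩
        · exact key x y hc u1 u2 u3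
        · exact key y x (by rwa [Sym2.eq_swap] at hc) u1 u2 u3
    -- the apex sv on the far side of q q'
    have hCne : (Finset.univ.filter (fun z : ZMod n => (q-p).val < (z-p).val ∧
        (z-p).val < (q'-p).val ∧ (s(q,z) ∈ T ∨ (z-p).val = (q-p).val + 1))).Nonempty := by
      refine ⟨p + (((q-p).val + 1 : ℕ) : ZMod n), Finset.mem_filter.2
        ⟨Finset.mem_univ _, ?_⟩⟩
      rw [fv_padd p _ (by omega)]
      exact ⟨by omega, by omega, Or.inr rfl⟩
    obtain ⟨sv, hsvC, hsvmax⟩ := Finset.exists_max_image _ (fun z => (z-p).val) hCne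
    rw [Finset.mem_filter] at hsvC
    obtain ⟨-, hs1, hs2, hs3⟩ := hsvC
    have hqs : s(q,sv) ∈ T ∨ sv = q + 1 := by
      rcases hs3 with h | h
      · exact Or.inl h
      · refine Or.inr ((eq_add_one_iff hn p q sv).2 ?_)
        rw [h, Nat.mod_eq_of_lt (by omega)]
    -- if sv = q+1 as element, its value is fvq + 1
    have hsvval : sv = q + 1 → (sv-p).val = (q-p).val + 1 := by
      intro h
      have := (eq_add_one_iff hn p q sv).1 h
      rwa [Nat.mod_eq_of_lt (by omega)] at this
    -- the triangle q sv q' : s(sv,q') is a chord of T or q' = sv+1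
    have hsq' : s(sv,q') ∈ T ∨ q' = sv + 1 := by
      by_cases hS1 : (q'-p).val = (sv-p).val + 1
      · refine Or.inr ((eq_add_one_iff hn p sv q').2 ?_)
        rw [hS1, Nat.mod_eq_of_lt (by omega)]
      · refine Or.inl (tri_insert hn ⟨hcard, hch, hcr⟩ ?_ ?_)
        · rw [chord_iff hn p]
          exact ⟨by omega, by omega, by omega, by omega, by omega⟩
        · have key : ∀ x y : ZMod n, s(x,y) ∈ T →
              (sv-p).val < (x-p).val → (x-p).val < (q'-p).val →
              ((y-p).val < (sv-p).val ∨ (q'-p).val < (y-p).val) → False := by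
            intro x y hxy hx1 hx2 hy
            have hyx : s(y,x) ∈ T := by rwa [Sym2.eq_swap] at hxy
            rcases hy with hy | hy
            · rcases lt_trichotomy ((y-p).val) ((q-p).val) with hyq | hyq | hyq
              · exact seg_blockT p ⟨hcard, hch, hcr⟩ hqq'T hxy (by omega) (by omega)
                  (Or.inl (by omega))
              · have hyq' : y = q := fval_inj p hyq
                have hxC : x ∈ Finset.univ.filter (fun z : ZMod n =>
                    (q-p).val < (z-p).val ∧ (z-p).val < (q'-p).val ∧
                    (s(q,z) ∈ T ∨ (z-p).val = (q-p).val + 1)) := by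
                  refine Finset.mem_filter.2 ⟨Finset.mem_univ _, by omega, by omega,
                    Or.inl (by rwa [hyq'] at hyx)⟩
                have := hsvmax x hxC
                omega
              · rcases hqs with hqsT | hqs1
                · exact seg_blockT p ⟨hcard, hch, hcr⟩ hqsT hyx (by omega) (by omega)
                    (Or.inr (by omega))
                · have := hsvval hqs1
                  omega
            · exact anchor_block hn p ⟨hcard, hch, hcr⟩ ((hNbmem q').1 hq'Nb)
                hxy (by omega) (by omega) (by omega)
          intro c hc hcross
          induction c using Sym2.ind with | _ x y =>
          rw [crosses_iff p] at hcross
          simp only [CrossesN, BtwN] at hcross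
          have hsplit : ((sv-p).val < (x-p).val ∧ (x-p).val < (q'-p).val ∧
              ((y-p).val < (sv-p).val ∨ (q'-p).val < (y-p).val)) ∨
              ((sv-p).val < (y-p).val ∧ (y-p).val < (q'-p).val ∧
              ((x-p).val < (sv-p).val ∨ (q'-p).val < (x-p).val)) := by omega
          rcases hsplit with ⟨u1, u2, u3⟩ | ⟨u1, u2, u3⟩
          · exact key x y hc u1 u2 u3
          · exact key y x (by rwa [Sym2.eq_swap] at hc) u1 u2 u3
    -- sv is not joined to p
    have hpsv : s(p,sv) ∉ T := by
      intro h
      exact hgap sv ((hNbmem _).2 (Or.inl h)) ⟨hs1, hs2⟩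
    have hpsvne : s(p,sv) ≠ s(q,q') := sym2_ne_of_fv p (by omega)
    -- the flipped triangulation
    set T' : Finset (Sym2 (ZMod n)) := insert (s(p,sv)) (T.erase (s(q,q'))) with hT'
    have hgT' : s(p,sv) ∉ T.erase (s(q,q')) := fun h => hpsv (Finset.mem_of_mem_erase h)
    have hmemT' : ∀ c, c ∈ T' ↔ (c = s(p,sv) ∨ (c ≠ s(q,q') ∧ c ∈ T)) := by
      intro c
      constructor
      · intro h
        rcases Finset.mem_insert.1 h with h | h
        · exact Or.inl h
        · exact Or.inr ⟨(Finset.mem_erase.1 h).1, (Finset.mem_erase.1 h).2⟩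
      · rintro (rfl | ⟨h1, h2⟩)
        · exact Finset.mem_insert_self _ _
        · exact Finset.mem_insert_of_mem (Finset.mem_erase.2 ⟨h1, h2⟩)
    have hcard' : T'.card = n - 3 := by
      rw [hT', Finset.card_insert_of_notMem hgT', Finset.card_erase_of_mem hqq'T, hcard]
      omega
    have hch' : ∀ c ∈ T', IsChord n c := by
      intro c hc
      rcases (hmemT' c).1 hc with rfl | ⟨_, hcT⟩
      · rw [chord_iff hn p]
        exact ⟨by omega, by omega, by omega, by omega, by omega⟩
      · exact hch c hcT
    -- the key crossing-freeness of the new chord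
    have hkey3 : ∀ x y : ZMod n, s(x,y) ∈ T → s(x,y) ≠ s(q,q') →
        0 < (x-p).val → (x-p).val < (sv-p).val → (sv-p).val < (y-p).val → False := by
      intro x y hxy hne hx0 hx1 hy1
      rcases lt_trichotomy ((x-p).val) ((q-p).val) with hxq | hxq | hxq
      · exact anchor_block hn p ⟨hcard, hch, hcr⟩ ((hNbmem q).1 hqNb) hxy hx0 (by omega)
          (by omega)
      · have hxq' : x = q := fval_inj p hxq
        rcases lt_trichotomy ((y-p).val) ((q'-p).val) with hyB | hyB | hyB
        · have hyC : y ∈ Finset.univ.filter (fun z : ZMod n =>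
              (q-p).val < (z-p).val ∧ (z-p).val < (q'-p).val ∧
              (s(q,z) ∈ T ∨ (z-p).val = (q-p).val + 1)) := by
            refine Finset.mem_filter.2 ⟨Finset.mem_univ _, by omega, hyB,
              Or.inl (by rwa [hxq'] at hxy)⟩
          have := hsvmax y hyC
          omega
        · have hyq2 : y = q' := fval_inj p hyB
          refine hne ?_
          rw [hxq', hyq2]
        · exact anchor_block hn p ⟨hcard, hch, hcr⟩ ((hNbmem q').1 hq'Nb) hxy
            (by omega) (by omega) (by omega)
      · rcases hqs with hqsT | hqs1
        · exact seg_blockT p ⟨hcard, hch, hcr⟩ hqsT hxy (by omega) (by omega)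
            (Or.inr (by omega))
        · have := hsvval hqs1
          omega
    have hgcross : ∀ d ∈ T', d ≠ s(p,sv) → ¬ Crosses n s(p,sv) d := by
      intro d hd hne hcross
      rcases (hmemT' d).1 hd with rfl | ⟨hdne, hdT⟩
      · exact hne rfl
      · induction d using Sym2.ind with | _ x y =>
        rw [crosses_iff p] at hcross
        simp only [CrossesN, BtwN] at hcross
        have hx := ZMod.val_lt (x - p)
        have hy := ZMod.val_lt (y - p)
        have hsplit : (0 < (x-p).val ∧ (x-p).val < (sv-p).val ∧ (sv-p).val < (y-p).val) ∨
            (0 < (y-p).val ∧ (y-p).val < (sv-p).val ∧ (sv-p).val < (x-p).val) := by omega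
        rcases hsplit with ⟨u1, u2, u3⟩ | ⟨u1, u2, u3⟩
        · exact hkey3 x y hdT hdne u1 u2 u3
        · have hd' : s(y,x) ∈ T := by rwa [Sym2.eq_swap] at hdT
          have hdne' : s(y,x) ≠ s(q,q') := by rwa [Sym2.eq_swap] at hdne
          exact hkey3 y x hd' hdne' u1 u2 u3
    have hcr' : ∀ c ∈ T', ∀ d ∈ T', c ≠ d → ¬ Crosses n c d := by
      intro c hc d hd hne hcross
      by_cases hcg : c = s(p,sv)
      · subst hcg
        exact hgcross d hd (fun h => hne h.symm) hcross
      · by_cases hdg : d = s(p,sv)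
        · subst hdg
          exact hgcross c hc (fun h => hne h) (crosses_symm hcross)
        · rcases (hmemT' c).1 hc with h | ⟨_, hcT⟩
          · exact hcg h
          rcases (hmemT' d).1 hd with h | ⟨_, hdT⟩
          · exact hdg h
          exact hcr c hcT d hdT hne hcross
    -- flip adjacency
    have hsd : symmDiff T T' = {s(q,q'), s(p,sv)} := by
      ext c
      rw [Finset.mem_symmDiff]
      simp only [Finset.mem_insert, Finset.mem_singleton]
      constructor
      · rintro (⟨hcT, hno⟩ | ⟨hcT', hno⟩)
        · by_contra hcon
          push_neg at hcon
          exact hno ((hmemT' c).2 (Or.inr ⟨hcon.1, hcT⟩))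
        · rcases (hmemT' c).1 hcT' with rfl | ⟨h1, h2⟩
          · exact Or.inr rfl
          · exact absurd h2 hno
      · rintro (rfl | rfl)
        · exact Or.inl ⟨hqq'T, fun h =>
            (((hmemT' _).1 h).elim (fun h' => hpsvne h'.symm) (fun h' => h'.1 rfl))⟩
        · exact Or.inr ⟨(hmemT' _).2 (Or.inl rfl), hpsv⟩
    have hflip : FlipAdj n T T' := by
      rw [FlipAdj, hsd]
      rw [Finset.card_insert_of_notMem (by simp [hpsvne.symm]), Finset.card_singleton]
    -- the count of chords through p increases
    have hpg : p ∈ s(p,sv) := Sym2.mem_mk_left p sv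
    have hpqq' : p ∉ s(q,q') := by
      intro hmem
      rcases Sym2.mem_iff.1 hmem with h1 | h1
      · have : (q-p).val = 0 := by rw [← h1]; simp
        omega
      · have : (q'-p).val = 0 := by rw [← h1]; simp
        omega
    have hfil : T'.filter (fun c => p ∈ c) = insert (s(p,sv)) (T.filter (fun c => p ∈ c)) := by
      ext c
      simp only [Finset.mem_filter, Finset.mem_insert]
      constructor
      · rintro ⟨hc, hp⟩
        rcases (hmemT' c).1 hc with rfl | ⟨_, hcT⟩
        · exact Or.inl rfl
        · exact Or.inr ⟨hcT, hp⟩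
      · rintro (rfl | ⟨hcT, hp⟩)
        · exact ⟨(hmemT' _).2 (Or.inl rfl), hpg⟩
        · refine ⟨(hmemT' c).2 (Or.inr ⟨?_, hcT⟩), hp⟩
          intro h
          rw [h] at hp
          exact hpqq' hp
    have hgfil : s(p,sv) ∉ T.filter (fun c => p ∈ c) := fun h =>
      hpsv (Finset.mem_filter.1 h).1
    refine ⟨T', ⟨hcard', hch', hcr'⟩, hflip, ?_, ?_⟩
    · rw [hfil, Finset.card_insert_of_notMem hgfil]
    · intro c hc
      rcases (hmemT' c).1 hc with rfl | ⟨_, hcT⟩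
      · exact Or.inr hpg
      · exact Or.inl hcT

lemma full_eq [NeZero n] (hn : 3 ≤ n) (p : ZMod n) {S T : Finset (Sym2 (ZMod n))}
    (hS : IsTriangulation n S) (hT : IsTriangulation n T)
    (hSf : ∀ c ∈ S, p ∈ c) (hTf : ∀ c ∈ T, p ∈ c) : S = T := by
  classical
  have d1 : p ≠ p + 1 := by
    intro h
    have h1 := fv_p_add_one hn p
    rw [← h] at h1
    simp at h1
  have d2 : p ≠ p - 1 := by
    intro h
    have h1 := fv_p_sub_one hn p
    rw [← h] at h1
    simp at h1
    omega
  have d3 : p + 1 ≠ p - 1 := by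
    intro h
    have h1 := fv_p_add_one hn p
    have h2 := fv_p_sub_one hn p
    rw [h] at h1
    omega
  set F : Finset (Sym2 (ZMod n)) :=
    (Finset.univ \ {p, p + 1, p - 1}).image (fun x => s(p,x)) with hF
  have hFcard : F.card = n - 3 := by
    rw [hF, Finset.card_image_of_injOn, Finset.card_sdiff_of_subset (Finset.subset_univ _)]
    · rw [Finset.card_univ, ZMod.card]
      have : ({p, p + 1, p - 1} : Finset (ZMod n)).card = 3 :=
        Finset.card_eq_three.2 ⟨p, p + 1, p - 1, d1, d2, d3, rfl⟩
      rw [this]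
    · intro x _ y _ h
      rcases Sym2.eq_iff.1 h with ⟨_, h2⟩ | ⟨h1, h2⟩
      · exact h2
      · rw [← h1, h2]
  have key : ∀ U : Finset (Sym2 (ZMod n)), IsTriangulation n U →
      (∀ c ∈ U, p ∈ c) → U = F := by
    intro U hU hUf
    have hsub : U ⊆ F := by
      intro c hc
      obtain ⟨z, rfl⟩ := Sym2.mem_iff_exists.1 (hUf c hc)
      have hch := (isChord_pair_iff p z).1 (hU.2.1 _ hc)
      refine Finset.mem_image.2 ⟨z, ?_, rfl⟩
      rw [Finset.mem_sdiff]
      refine ⟨Finset.mem_univ _, ?_⟩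
      simp only [Finset.mem_insert, Finset.mem_singleton]
      push_neg
      refine ⟨fun h => hch.1 h.symm, hch.2.1, fun h => hch.2.2 ((eq_sub_one' p z).1 h)⟩
    exact Finset.eq_of_subset_of_card_le hsub (by rw [hFcard, hU.1])
  rw [key S hS hSf, key T hT hTf]

lemma reach_full [NeZero n] (hn : 3 ≤ n) (p : ZMod n) (e₀ : Sym2 (ZMod n)) (hpe : p ∉ e₀) :
    ∀ k (T : Finset (Sym2 (ZMod n))), AvoidingTri n {e₀} T →
      T.card - (T.filter (fun c => p ∈ c)).card ≤ k →
      ∃ U, FlipConn n {e₀} T U ∧ IsTriangulation n U ∧ ∀ c ∈ U, p ∈ c := by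
  intro k
  induction k with
  | zero =>
    intro T hT hle
    have hfle := Finset.card_filter_le T (fun c => p ∈ c)
    have : T.filter (fun c => p ∈ c) = T :=
      Finset.eq_of_subset_of_card_le (Finset.filter_subset _ _) (by omega)
    refine ⟨T, Relation.ReflTransGen.refl, hT.1, fun c hc => ?_⟩
    rw [← this] at hc
    exact (Finset.mem_filter.1 hc).2
  | succ k ih =>
    intro T hT hle
    by_cases hfull : ∀ c ∈ T, p ∈ c
    · exact ⟨T, Relation.ReflTransGen.refl, hT.1, hfull⟩
    · push_neg at hfull
      obtain ⟨c₀, hc₀T, hc₀p⟩ := hfull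
      obtain ⟨T', hT'tri, hT'flip, hT'fil, hT'sub⟩ := improve hn p hT.1 ⟨c₀, hc₀T, hc₀p⟩
      have hT'avoid : Avoids n T' {e₀} := by
        intro e' he'
        rw [Finset.mem_singleton] at he'
        subst he'
        intro hmem
        rcases hT'sub e' hmem with h | h
        · exact hT.2 e' (Finset.mem_singleton_self _) h
        · exact hpe h
      have hstep : FlipStep n {e₀} T T' := ⟨hT, ⟨hT'tri, hT'avoid⟩, hT'flip⟩
      have hflt : (T.filter (fun c => p ∈ c)).card < T.card := by
        refine Finset.card_lt_card ⟨Finset.filter_subset _ _, fun hsub => ?_⟩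
        exact hc₀p (Finset.mem_filter.1 (hsub hc₀T)).2
      have hcards : T'.card = T.card := by
        rw [hT'tri.1, hT.1.1]
      obtain ⟨U, hU1, hU2, hU3⟩ := ih T' ⟨hT'tri, hT'avoid⟩ (by omega)
      exact ⟨U, Relation.ReflTransGen.head hstep hU1, hU2, hU3⟩

end Aux

/-- The convex `n`-gon has no flip cut edge: for every chord
`e`, the flip graph `F₋₍ₑ₎` of triangulations avoiding `e` is connected. -/
theorem no_flip_cut_edge_convex (n : ℕ) (hn : 3 ≤ n)
    (e : Sym2 (ZMod n)) (he : IsChord n e) :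
    FlipGraphConnected n {e} := by
  haveI : NeZero n := ⟨by omega⟩
  classical
  intro S T hS hT
  -- pick a vertex p not on e
  induction e using Sym2.ind with | _ a b =>
  have hcompl : (({a, b} : Finset (ZMod n))ᶜ).Nonempty := by
    rw [← Finset.card_pos, Finset.card_compl, ZMod.card]
    have : ({a, b} : Finset (ZMod n)).card ≤ 2 := Finset.card_insert_le _ _ |>.trans (by simp)
    omega
  obtain ⟨p, hp⟩ := hcompl
  rw [Finset.mem_compl] at hp
  have hpe : p ∉ s(a, b) := by
    intro h
    rcases Sym2.mem_iff.1 h with rfl | rfl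
    · exact hp (Finset.mem_insert_self _ _)
    · exact hp (Finset.mem_insert_of_mem (Finset.mem_singleton_self _))
  obtain ⟨US, hconnS, hUStri, hUSf⟩ := reach_full hn p s(a,b) hpe S.card S hS (by omega)
  obtain ⟨UT, hconnT, hUTtri, hUTf⟩ := reach_full hn p s(a,b) hpe T.card T hT (by omega)
  have hUU : US = UT := full_eq hn p hUStri hUTtri hUSf hUTf
  have hsymm : Symmetric (FlipStep n {s(a,b)}) := by
    rintro x y ⟨h1, h2, h3⟩
    exact ⟨h2, h1, by rwa [FlipAdj, symmDiff_comm]⟩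
  refine Relation.ReflTransGen.trans hconnS ?_
  rw [hUU]
  exact (haveI : Std.Symm (FlipStep n {s(a,b)}) := ⟨fun x y h => hsymm h⟩
    Relation.ReflTransGen.symmetric.symm _ _ hconnT)

end FlipCut
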